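/- Let $(\tau_j)_{j\ge1}$ be a strictly increasing sequence (where finite) of random times with marks $(X_j)_{j\ge1}$, and for $j \ge 1$ let $\mathcal{H}^{\le j}_t$ be the $\sigma$-algebra generated by $(\mathbf{1}_{\{\tau_k \le s\}}\mathbf{1}_{\{X_k \in B\}})$ for $k \le j$, $s \le t$, $B$ Borel, and $\mathcal{H}^{\le j}_\infty$ its terminal $\sigma$-algebra. Then for any sub-$\sigma$-algebra $\mathcal{A} \subseteq \mathcal{G}$, any $A \in \mathcal{H}^{\le j}_\infty \vee \mathcal{A}$ and any $t \ge 0$, one has $A \cap \{\tau_j \le t\} \in \mathcal{H}^{\le j}_t \vee \mathcal{A}$; consequently $E[\mathbf{1}_{\{\tau_j \le t\}} Y \mid \mathcal{H}^{\le j}_t \vee \mathcal{A}] = E[\mathbf{1}_{\{\tau_j \le t\}} Y \mid \mathcal{H}^{\le j}_\infty \vee \mathcal{A}]$ a.s. for every integrable $Y$. -/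

import Mathlib

open MeasureTheory ProbabilityTheory Set
open scoped ENNReal

lemma aux_indicator_comap_self {Ω : Type*} (S : Set Ω) :
    MeasurableSet[MeasurableSpace.comap (S.indicator (fun _ => (1 : ℝ))) inferInstance] S := by
  refine ⟨{1}, measurableSet_singleton 1, ?_⟩
  ext ω
  by_cases h : ω ∈ S <;> simp [Set.indicator_apply, h]

/-- Full-information filtration. -/
noncomputable def auxHinf {Ω : Type*} (τ : ℕ → Ω → ℝ≥0∞) (X : ℕ → Ω → ℝ) (j : ℕ) : MeasurableSpace Ω :=
  ⨆ (k : ℕ) (_ : k ≤ j) (s : ℝ≥0∞) (B : Set ℝ) (_ : MeasurableSet B),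
    MeasurableSpace.comap
      (Set.indicator {ω' | τ k ω' ≤ s ∧ X k ω' ∈ B} fun _ => (1 : ℝ)) inferInstance

/-- Time-`t` filtration. -/
noncomputable def auxHt {Ω : Type*} (τ : ℕ → Ω → ℝ≥0∞) (X : ℕ → Ω → ℝ) (j : ℕ) (t : ℝ≥0∞) :
    MeasurableSpace Ω :=
  ⨆ (k : ℕ) (_ : k ≤ j) (s : ℝ≥0∞) (_ : s ≤ t) (B : Set ℝ) (_ : MeasurableSet B),
    MeasurableSpace.comap
      (Set.indicator {ω' | τ k ω' ≤ s ∧ X k ω' ∈ B} fun _ => (1 : ℝ)) inferInstance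

/-- Trace σ-algebra: sets whose intersection with `T` is `n`-measurable. -/
def auxM {Ω : Type*} (n : MeasurableSpace Ω) (T : Set Ω) (hT : MeasurableSet[n] T) :
    MeasurableSpace Ω where
  MeasurableSet' A := MeasurableSet[n] (A ∩ T)
  measurableSet_empty := by simp
  measurableSet_compl := by
    intro A hA
    have heq : Aᶜ ∩ T = T \ (A ∩ T) := by
      ext ω; by_cases h : ω ∈ A <;> simp [h]
    show MeasurableSet[n] (Aᶜ ∩ T)
    rw [heq]
    exact hT.diff hA
  measurableSet_iUnion := by
    intro f hf
    show MeasurableSet[n] ((⋃ i, f i) ∩ T)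
    rw [Set.iUnion_inter]
    exact MeasurableSet.iUnion hf

lemma auxM_iff {Ω : Type*} (n : MeasurableSpace Ω) (T : Set Ω) (hT : MeasurableSet[n] T)
    (A : Set Ω) : MeasurableSet[auxM n T hT] A ↔ MeasurableSet[n] (A ∩ T) := Iff.rfl

theorem partial_information_eq_full_after_jump
    {Ω : Type*} {m0 : MeasurableSpace Ω} (P : Measure Ω) [IsProbabilityMeasure P]
    (τ : ℕ → Ω → ℝ≥0∞) (X : ℕ → Ω → ℝ)
    (hτ : ∀ k, Measurable (τ k)) (hX : ∀ k, Measurable (X k))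
    (hτpos : ∀ k ω, 0 < τ k ω)
    (hmono : ∀ k ω, τ k ω ≤ τ (k + 1) ω)
    (hstrict : ∀ k ω, τ k ω < ⊤ → τ k ω < τ (k + 1) ω)
    (𝓐 : MeasurableSpace Ω) (h𝓐 : 𝓐 ≤ m0)
    (j : ℕ) (t : ℝ≥0∞) :
    (∀ A : Set Ω,
      MeasurableSet[(⨆ (k : ℕ) (_ : k ≤ j) (s : ℝ≥0∞) (B : Set ℝ) (_ : MeasurableSet B),
          MeasurableSpace.comap
            (Set.indicator {ω' | τ k ω' ≤ s ∧ X k ω' ∈ B} fun _ => (1 : ℝ)) inferInstance) ⊔ 𝓐] A →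
      MeasurableSet[(⨆ (k : ℕ) (_ : k ≤ j) (s : ℝ≥0∞) (_ : s ≤ t) (B : Set ℝ)
          (_ : MeasurableSet B),
          MeasurableSpace.comap
            (Set.indicator {ω' | τ k ω' ≤ s ∧ X k ω' ∈ B} fun _ => (1 : ℝ)) inferInstance) ⊔ 𝓐]
        (A ∩ {ω | τ j ω ≤ t}))
    ∧ ∀ Y : Ω → ℝ, Integrable Y P →
      (P[(fun ω => Set.indicator {ω' | τ j ω' ≤ t} (fun _ => (1 : ℝ)) ω * Y ω) |
          (⨆ (k : ℕ) (_ : k ≤ j) (s : ℝ≥0∞) (_ : s ≤ t) (B : Set ℝ) (_ : MeasurableSet B),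
            MeasurableSpace.comap
              (Set.indicator {ω' | τ k ω' ≤ s ∧ X k ω' ∈ B} fun _ => (1 : ℝ)) inferInstance) ⊔ 𝓐])
        =ᵐ[P]
      (P[(fun ω => Set.indicator {ω' | τ j ω' ≤ t} (fun _ => (1 : ℝ)) ω * Y ω) |
          (⨆ (k : ℕ) (_ : k ≤ j) (s : ℝ≥0∞) (B : Set ℝ) (_ : MeasurableSet B),
            MeasurableSpace.comap
              (Set.indicator {ω' | τ k ω' ≤ s ∧ X k ω' ∈ B} fun _ => (1 : ℝ)) inferInstance) ⊔ 𝓐]) := by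
  classical
  set T : Set Ω := {ω | τ j ω ≤ t} with hTdef
  show (∀ A : Set Ω, MeasurableSet[auxHinf τ X j ⊔ 𝓐] A →
        MeasurableSet[auxHt τ X j t ⊔ 𝓐] (A ∩ T))
    ∧ ∀ Y : Ω → ℝ, Integrable Y P →
      (P[(fun ω => T.indicator (fun _ => (1 : ℝ)) ω * Y ω) | auxHt τ X j t ⊔ 𝓐])
        =ᵐ[P] (P[(fun ω => T.indicator (fun _ => (1 : ℝ)) ω * Y ω) | auxHinf τ X j ⊔ 𝓐])
  -- monotonicity of τ in k
  have hchain : ∀ k, k ≤ j → ∀ ω, τ k ω ≤ τ j ω := by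
    intro k hk ω
    exact (monotone_nat_of_le_succ (fun n => hmono n ω)) hk
  -- generators in ℋt
  have hgen_t : ∀ k, k ≤ j → ∀ s, s ≤ t → ∀ B : Set ℝ, MeasurableSet B →
      MeasurableSet[auxHt τ X j t] {ω | τ k ω ≤ s ∧ X k ω ∈ B} := by
    intro k hk s hs B hB
    have hle : MeasurableSpace.comap
        (Set.indicator {ω' | τ k ω' ≤ s ∧ X k ω' ∈ B} fun _ => (1 : ℝ)) inferInstance
        ≤ auxHt τ X j t :=
      le_iSup_of_le k (le_iSup_of_le hk (le_iSup_of_le s (le_iSup_of_le hs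
        (le_iSup_of_le B (le_iSup_of_le hB le_rfl)))))
    exact hle _ (aux_indicator_comap_self _)
  -- T is in ℋt
  have hT_t : MeasurableSet[auxHt τ X j t] T := by
    have h := hgen_t j le_rfl t le_rfl Set.univ MeasurableSet.univ
    have heq : {ω | τ j ω ≤ t ∧ X j ω ∈ (Set.univ : Set ℝ)} = T := by
      ext ω; simp [hTdef]
    rwa [heq] at h
  have hT_m1 : MeasurableSet[auxHt τ X j t ⊔ 𝓐] T :=
    (le_sup_left : auxHt τ X j t ≤ auxHt τ X j t ⊔ 𝓐) _ hT_t
  -- ℋ∞ ⊔ 𝓐 ≤ trace σ-algebra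
  have hle_M : auxHinf τ X j ⊔ 𝓐 ≤ auxM (auxHt τ X j t ⊔ 𝓐) T hT_m1 := by
    refine sup_le ?_ ?_
    · refine iSup_le fun k => iSup_le fun hk => iSup_le fun s => iSup_le fun B =>
        iSup_le fun hB => ?_
      have hSM : MeasurableSet[auxM (auxHt τ X j t ⊔ 𝓐) T hT_m1]
          {ω | τ k ω ≤ s ∧ X k ω ∈ B} := by
        rw [auxM_iff]
        have heq : {ω | τ k ω ≤ s ∧ X k ω ∈ B} ∩ T
            = {ω | τ k ω ≤ s ⊓ t ∧ X k ω ∈ B} ∩ T := by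
          ext ω
          simp only [Set.mem_inter_iff, Set.mem_setOf_eq, hTdef]
          constructor
          · rintro ⟨⟨h1, h2⟩, h3⟩
            exact ⟨⟨le_inf h1 ((hchain k hk ω).trans h3), h2⟩, h3⟩
          · rintro ⟨⟨h1, h2⟩, h3⟩
            exact ⟨⟨h1.trans inf_le_left, h2⟩, h3⟩
        rw [heq]
        exact (le_sup_left : auxHt τ X j t ≤ auxHt τ X j t ⊔ 𝓐) _
          ((hgen_t k hk (s ⊓ t) inf_le_right B hB).inter hT_t)
      have hmeas : @Measurable Ω ℝ (auxM (auxHt τ X j t ⊔ 𝓐) T hT_m1) _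
          (Set.indicator {ω' | τ k ω' ≤ s ∧ X k ω' ∈ B} fun _ => (1 : ℝ)) :=
        Measurable.indicator (m := auxM (auxHt τ X j t ⊔ 𝓐) T hT_m1) measurable_const hSM
      exact measurable_iff_comap_le.mp hmeas
    · intro A hA
      rw [auxM_iff]
      exact ((le_sup_right : 𝓐 ≤ auxHt τ X j t ⊔ 𝓐) _ hA).inter hT_m1
  have part1 : ∀ A : Set Ω, MeasurableSet[auxHinf τ X j ⊔ 𝓐] A →
      MeasurableSet[auxHt τ X j t ⊔ 𝓐] (A ∩ T) := by
    intro A hA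
    exact (auxM_iff _ _ _ A).mp (hle_M _ hA)
  refine ⟨part1, ?_⟩
  -- part 2
  intro Y hY
  have hHinf_le : auxHinf τ X j ≤ m0 := by
    refine iSup_le fun k => iSup_le fun hk => iSup_le fun s => iSup_le fun B =>
      iSup_le fun hB => ?_
    have hS0 : MeasurableSet[m0] {ω | τ k ω ≤ s ∧ X k ω ∈ B} := by
      have h1 : MeasurableSet[m0] {ω | τ k ω ≤ s} := (hτ k) measurableSet_Iic
      have h2 : MeasurableSet[m0] {ω | X k ω ∈ B} := (hX k) hB
      exact h1.inter h2
    exact measurable_iff_comap_le.mp (measurable_const.indicator hS0)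
  have hm2 : auxHinf τ X j ⊔ 𝓐 ≤ m0 := sup_le hHinf_le h𝓐
  have h12 : auxHt τ X j t ≤ auxHinf τ X j :=
    iSup_mono fun k => iSup_mono fun hk => iSup_mono fun s => iSup_le fun _ => le_rfl
  have hm12 : auxHt τ X j t ⊔ 𝓐 ≤ auxHinf τ X j ⊔ 𝓐 := sup_le_sup_right h12 𝓐
  have hm1 : auxHt τ X j t ⊔ 𝓐 ≤ m0 := hm12.trans hm2
  have hT0 : MeasurableSet[m0] T := hm1 _ hT_m1
  have hT_m2 : MeasurableSet[auxHinf τ X j ⊔ 𝓐] T := hm12 _ hT_m1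
  -- the integrand is T.indicator Y
  have hf_eq : (fun ω => T.indicator (fun _ => (1 : ℝ)) ω * Y ω) = T.indicator Y := by
    funext ω
    by_cases h : ω ∈ T <;> simp [Set.indicator_apply, h]
  rw [hf_eq]
  have hfi : Integrable (T.indicator Y) P := Integrable.indicator (mα := m0) hY hT0
  set g : Ω → ℝ := P[T.indicator Y | auxHinf τ X j ⊔ 𝓐] with hg
  -- g =ᵐ T.indicator g
  have hg_ind : g =ᵐ[P] T.indicator g := by
    have h1 : P[T.indicator Y | auxHinf τ X j ⊔ 𝓐]
        =ᵐ[P] T.indicator (P[Y | auxHinf τ X j ⊔ 𝓐]) := condExp_indicator hY hT_m2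
    filter_upwards [h1] with ω hω
    by_cases h : ω ∈ T
    · simp [Set.indicator_of_mem h]
    · rw [hg, hω, Set.indicator_of_notMem h, Set.indicator_of_notMem h]
  -- T.indicator g is (ℋt ⊔ 𝓐)-measurable
  have hg_meas2 : Measurable[auxHinf τ X j ⊔ 𝓐] g := stronglyMeasurable_condExp.measurable
  have hind_meas : @Measurable Ω ℝ (auxHt τ X j t ⊔ 𝓐) _ (T.indicator g) := by
    intro s hs
    have h1 : MeasurableSet[auxHt τ X j t ⊔ 𝓐] (g ⁻¹' s ∩ T) := part1 _ (hg_meas2 hs)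
    by_cases h0 : (0 : ℝ) ∈ s
    · have heq : T.indicator g ⁻¹' s = (g ⁻¹' s ∩ T) ∪ Tᶜ := by
        ext ω; by_cases hω : ω ∈ T <;> simp [Set.indicator_apply, hω, h0]
      rw [heq]
      exact h1.union hT_m1.compl
    · have heq : T.indicator g ⁻¹' s = g ⁻¹' s ∩ T := by
        ext ω; by_cases hω : ω ∈ T <;> simp [Set.indicator_apply, hω, h0]
      rw [heq]
      exact h1
  have hind_int : Integrable (T.indicator g) P := Integrable.indicator (mα := m0) integrable_condExp hT0
  -- chain of a.e. equalities
  have step1 : P[T.indicator Y | auxHt τ X j t ⊔ 𝓐] =ᵐ[P] P[g | auxHt τ X j t ⊔ 𝓐] :=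
    (condExp_condExp_of_le hm12 hm2).symm
  have step2 : P[g | auxHt τ X j t ⊔ 𝓐] =ᵐ[P] P[T.indicator g | auxHt τ X j t ⊔ 𝓐] :=
    condExp_congr_ae hg_ind
  have step3 : P[T.indicator g | auxHt τ X j t ⊔ 𝓐] = T.indicator g :=
    condExp_of_stronglyMeasurable hm1
      (Measurable.stronglyMeasurable (mα := auxHt τ X j t ⊔ 𝓐) hind_meas) hind_int
  calc P[T.indicator Y | auxHt τ X j t ⊔ 𝓐] =ᵐ[P] P[g | auxHt τ X j t ⊔ 𝓐] := step1
    _ =ᵐ[P] P[T.indicator g | auxHt τ X j t ⊔ 𝓐] := step2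
    _ = T.indicator g := step3
    _ =ᵐ[P] g := hg_ind.symm
    _ = P[T.indicator Y | auxHinf τ X j ⊔ 𝓐] := rfl
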